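/- Let (X, 𝔄, μ) be a measure space and φ : ℝ → X → X a flow (φ₀ = id, φ_{s+t} = φ_s ∘ φ_t for all s, t ∈ ℝ) such that the map (t, x) ↦ φ_t(x) is measurable (with ℝ carrying the Borel σ-algebra) and each φ_t is measure preserving, i.e. μ(φ_t^{−1}(A)) = μ(A) for all A ∈ 𝔄 and t ∈ ℝ. Let A ∈ 𝔄 and let 0 < T₀ ≤ T₁ be such that φ_{−t}(x) ∉ A whenever x ∈ A and t ∈ [T₀, T₁]. Let B ∈ 𝔄 satisfy φ_t^{−1}(A) ⊆ B for every t ∈ [T₀, T₁]. Then (T₁ − T₀)·μ(A) ≤ T₀·μ(B). -/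

import Mathlib

open MeasureTheory

/-- If a subset of `[T₀, T₁]` has the property that any two of its points are at
distance `< T₀`, then its Lebesgue measure is at most `T₀`. -/
lemma visit_time_bound {T₀ T₁ : ℝ} (S : Set ℝ)
    (hsub : S ⊆ Set.Icc T₀ T₁)
    (hdiff : ∀ s ∈ S, ∀ t ∈ S, s ≤ t → t - s < T₀) :
    volume S ≤ ENNReal.ofReal T₀ := by
  rcases S.eq_empty_or_nonempty with h | hne
  · simp [h]
  · have hbdd : BddBelow S := ⟨T₀, fun t ht => (hsub ht).1⟩
    set a := sInf S with ha
    have hsubI : S ⊆ Set.Icc a (a + T₀) := by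
      intro t ht
      refine ⟨csInf_le hbdd ht, ?_⟩
      by_contra hlt
      push_neg at hlt
      have h1 : a < t - T₀ := by linarith
      obtain ⟨s, hs, hst⟩ := exists_lt_of_csInf_lt hne h1
      have hT₀pos : (0:ℝ) < T₀ := by
        have := hdiff s hs s hs le_rfl
        linarith
      have hsle : s ≤ t := by linarith
      have := hdiff s hs t ht hsle
      linarith
    calc volume S ≤ volume (Set.Icc a (a + T₀)) := measure_mono hsubI
      _ = ENNReal.ofReal T₀ := by rw [Real.volume_Icc]; ring_nf

/-- Key step in the proof of Lemma 3.6: for a measure-preserving flow `φ`, if the set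
`A` cannot be revisited after any time lag in `[T₀, T₁]` and `B` contains all the
preimages `φ_t⁻¹(A)` for `t ∈ [T₀, T₁]`, then `(T₁ - T₀)·μ(A) ≤ T₀·μ(B)`. -/
theorem stmt_13 {X : Type*} [MeasurableSpace X] (μ : Measure X)
    (φ : ℝ → X → X) (hφ0 : φ 0 = id) (hφadd : ∀ s t : ℝ, φ (s + t) = φ s ∘ φ t)
    (hφmeas : Measurable fun p : ℝ × X => φ p.1 p.2)
    (hφpres : ∀ (t : ℝ) (A : Set X), MeasurableSet A → μ (φ t ⁻¹' A) = μ A)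
    (A : Set X) (hAmeas : MeasurableSet A)
    (T₀ T₁ : ℝ) (hT₀ : 0 < T₀) (hT : T₀ ≤ T₁)
    (hA : ∀ x ∈ A, ∀ t ∈ Set.Icc T₀ T₁, φ (-t) x ∉ A)
    (B : Set X) (hBmeas : MeasurableSet B)
    (hB : ∀ t ∈ Set.Icc T₀ T₁, φ t ⁻¹' A ⊆ B) :
    ENNReal.ofReal (T₁ - T₀) * μ A ≤ ENNReal.ofReal T₀ * μ B := by
  -- If `μ B = ∞` the result is trivial.
  rcases eq_or_ne (μ B) ⊤ with hBtop | hBfin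
  · rw [hBtop, ENNReal.mul_top (ENNReal.ofReal_pos.mpr hT₀).ne']
    exact le_top
  -- Otherwise restrict `μ` to `B` and use Tonelli on the product.
  set μ' : Measure X := μ.restrict B with hμ'
  have : IsFiniteMeasure μ' := ⟨by simpa [hμ', Measure.restrict_apply_univ] using hBfin.lt_top⟩
  set ν : Measure ℝ := volume.restrict (Set.Icc T₀ T₁) with hν
  set M : Set (ℝ × X) := {p : ℝ × X | φ p.1 p.2 ∈ A} with hM
  have hMmeas : MeasurableSet M := hφmeas hAmeas
  -- First computation: slice in `t`.
  have h1 : (ν.prod μ') M = ENNReal.ofReal (T₁ - T₀) * μ A := by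
    rw [Measure.prod_apply hMmeas]
    have : ∀ t ∈ Set.Icc T₀ T₁, μ' (Prod.mk t ⁻¹' M) = μ A := by
      intro t ht
      have hpre : Prod.mk t ⁻¹' M = φ t ⁻¹' A := rfl
      rw [hpre, hμ', Measure.restrict_apply' hBmeas,
        Set.inter_eq_left.mpr (hB t ht), hφpres t A hAmeas]
    calc ∫⁻ t, μ' (Prod.mk t ⁻¹' M) ∂ν
        = ∫⁻ t in Set.Icc T₀ T₁, μ' (Prod.mk t ⁻¹' M) := by rw [hν]
      _ = ∫⁻ _ in Set.Icc T₀ T₁, μ A := setLIntegral_congr_fun measurableSet_Icc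
            (fun t ht => this t ht)
      _ = ENNReal.ofReal (T₁ - T₀) * μ A := by
            rw [setLIntegral_const, Real.volume_Icc, mul_comm]
  -- Second computation: slice in `x`, bound each visiting-time section by `T₀`.
  have h2 : (ν.prod μ') M ≤ ENNReal.ofReal T₀ * μ B := by
    rw [Measure.prod_apply_symm hMmeas]
    have hsec : ∀ x : X, ν ((fun t => (t, x)) ⁻¹' M) ≤ ENNReal.ofReal T₀ := by
      intro x
      have hνapp : ν ((fun t => (t, x)) ⁻¹' M)
          = volume (Set.Icc T₀ T₁ ∩ {t : ℝ | φ t x ∈ A}) := by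
        rw [hν, Measure.restrict_apply' measurableSet_Icc, Set.inter_comm]
        rfl
      rw [hνapp]
      apply visit_time_bound
      · exact Set.inter_subset_left
      · rintro s ⟨hsI, hsA⟩ t ⟨htI, htA⟩ hst
        by_contra hge
        push_neg at hge
        have hts : t - s ∈ Set.Icc T₀ T₁ := by
          constructor
          · exact hge
          · have := htI.2; have := hsI.1; linarith
        apply hA (φ t x) htA (t - s) hts
        have key : φ (-(t - s)) (φ t x) = φ s x := by
          have h := congrFun (hφadd (-(t - s)) t) x
          simp only [Function.comp_apply] at h
          have e : -(t - s) + t = s := by ring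
          rw [e] at h
          exact h.symm
        rw [key]
        exact hsA
    calc ∫⁻ x, ν ((fun t => (t, x)) ⁻¹' M) ∂μ'
        ≤ ∫⁻ _, ENNReal.ofReal T₀ ∂μ' := lintegral_mono hsec
      _ = ENNReal.ofReal T₀ * μ B := by
          rw [lintegral_const, hμ', Measure.restrict_apply_univ]
  rw [← h1]
  exact h2
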